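/- Decomposition of the two-stage policy value through stage-2 conditional expectations: assume that either (i) for each a₁ ∈ {0,1}, V₁ is σ(V₂^{a₁})-measurable, or (ii) for all a₁, a₂ ∈ {0,1}, E[U^{a₁,a₂} ∣ σ(V₁) ⊔ σ(V₂^{a₁})] = E[U^{a₁,a₂} ∣ σ(V₂^{a₁})] almost surely. Then for every policy d = (d₁, d₂), Val(d) = Σ_{a₁ ∈ {0,1}} E[(Σ_{a₂ ∈ {0,1}} E[U^{a₁,a₂} ∣ σ(V₂^{a₁})]·1{d₂(a₁, V₂^{a₁}) = a₂})·1{d₁(V₁) = a₁}]. -/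
import Mathlib


open MeasureTheory

/-- Decomposition of the two-stage policy value through stage-2 conditional
expectations: under the nestedness or coarsening condition, for every policy
`d = (d₁, d₂)`,
`Val(d) = Σ_{a₁} E[(Σ_{a₂} E[U^{a₁,a₂} ∣ σ(V₂^{a₁})]·1{d₂(a₁,V₂^{a₁}) = a₂})·1{d₁(V₁) = a₁}]`. -/
theorem two_stage_value_decomposition
    {Ω 𝓥₁ 𝓥₂ : Type*} [MeasurableSpace Ω] [MeasurableSpace 𝓥₁] [MeasurableSpace 𝓥₂]
    (μ : Measure Ω) [IsProbabilityMeasure μ]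
    (U : Bool → Bool → Ω → ℝ)
    (hUm : ∀ a₁ a₂, Measurable (U a₁ a₂))
    (hUint : ∀ a₁ a₂, Integrable (U a₁ a₂) μ)
    (V₁ : Ω → 𝓥₁) (hV₁ : Measurable V₁)
    (V₂ : Bool → Ω → 𝓥₂) (hV₂ : ∀ a₁, Measurable (V₂ a₁))
    (hcond :
      (∀ a₁ : Bool, Measurable[MeasurableSpace.comap (V₂ a₁) inferInstance] V₁) ∨
      (∀ a₁ a₂ : Bool,
        μ[U a₁ a₂ | MeasurableSpace.comap V₁ inferInstance
            ⊔ MeasurableSpace.comap (V₂ a₁) inferInstance]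
          =ᵐ[μ] μ[U a₁ a₂ | MeasurableSpace.comap (V₂ a₁) inferInstance]))
    (d₁ : 𝓥₁ → Bool) (hd₁ : Measurable d₁)
    (d₂ : Bool → 𝓥₂ → Bool) (hd₂ : ∀ a₁, Measurable (d₂ a₁)) :
    ∫ ω, ∑ a₁ : Bool, ∑ a₂ : Bool,
        U a₁ a₂ ω * (if d₂ a₁ (V₂ a₁ ω) = a₂ then (1:ℝ) else 0)
          * (if d₁ (V₁ ω) = a₁ then (1:ℝ) else 0) ∂μ
    = ∑ a₁ : Bool, ∫ ω,
        (∑ a₂ : Bool,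
          (μ[U a₁ a₂ | MeasurableSpace.comap (V₂ a₁) inferInstance]) ω
            * (if d₂ a₁ (V₂ a₁ ω) = a₂ then (1:ℝ) else 0))
          * (if d₁ (V₁ ω) = a₁ then (1:ℝ) else 0) ∂μ := by
  classical
  set m : Bool → MeasurableSpace Ω := fun a₁ =>
    MeasurableSpace.comap V₁ inferInstance ⊔ MeasurableSpace.comap (V₂ a₁) inferInstance
    with hmdef
  have hmle : ∀ a₁, m a₁ ≤ (inferInstance : MeasurableSpace Ω) :=
    fun a₁ => sup_le hV₁.comap_le (hV₂ a₁).comap_le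
  have hcond' : ∀ a₁ a₂ : Bool,
      μ[U a₁ a₂ | m a₁] =ᵐ[μ] μ[U a₁ a₂ | MeasurableSpace.comap (V₂ a₁) inferInstance] := by
    rcases hcond with h | h
    · intro a₁ a₂
      have hE : m a₁ = MeasurableSpace.comap (V₂ a₁) inferInstance :=
        le_antisymm (sup_le (measurable_iff_comap_le.mp (h a₁)) le_rfl) le_sup_right
      rw [hE]
    · exact h
  set A : Bool → Bool → Set Ω := fun a₁ a₂ =>
    {ω | d₂ a₁ (V₂ a₁ ω) = a₂} ∩ {ω | d₁ (V₁ ω) = a₁} with hAdef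
  have hA_m : ∀ a₁ a₂, MeasurableSet[m a₁] (A a₁ a₂) := by
    intro a₁ a₂
    have h1 : MeasurableSet[MeasurableSpace.comap (V₂ a₁) inferInstance]
        {ω | d₂ a₁ (V₂ a₁ ω) = a₂} :=
      ⟨d₂ a₁ ⁻¹' {a₂}, (hd₂ a₁) (measurableSet_singleton _), rfl⟩
    have h2 : MeasurableSet[MeasurableSpace.comap V₁ inferInstance]
        {ω | d₁ (V₁ ω) = a₁} :=
      ⟨d₁ ⁻¹' {a₁}, hd₁ (measurableSet_singleton _), rfl⟩
    exact MeasurableSet.inter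
      ((le_sup_right : MeasurableSpace.comap (V₂ a₁) inferInstance ≤ m a₁) _ h1)
      ((le_sup_left : MeasurableSpace.comap V₁ inferInstance ≤ m a₁) _ h2)
  have hA_meas : ∀ a₁ a₂, MeasurableSet (A a₁ a₂) := fun a₁ a₂ => hmle a₁ _ (hA_m a₁ a₂)
  -- key identity: set integral of U equals set integral of the stage-2 conditional expectation
  have key : ∀ a₁ a₂ : Bool,
      ∫ ω in A a₁ a₂, U a₁ a₂ ω ∂μ
        = ∫ ω in A a₁ a₂,
            (μ[U a₁ a₂ | MeasurableSpace.comap (V₂ a₁) inferInstance]) ω ∂μ := by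
    intro a₁ a₂
    haveI : SigmaFinite (μ.trim (hmle a₁)) := by
      haveI : IsFiniteMeasure (μ.trim (hmle a₁)) := isFiniteMeasure_trim _
      infer_instance
    rw [← setIntegral_condExp (hmle a₁) (hUint a₁ a₂) (hA_m a₁ a₂)]
    exact integral_congr_ae (ae_restrict_of_ae (hcond' a₁ a₂))
  -- pointwise rewriting of integrands as indicators
  have hLpt : ∀ (a₁ a₂ : Bool) (ω : Ω),
      U a₁ a₂ ω * (if d₂ a₁ (V₂ a₁ ω) = a₂ then (1:ℝ) else 0)
          * (if d₁ (V₁ ω) = a₁ then (1:ℝ) else 0)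
        = (A a₁ a₂).indicator (U a₁ a₂) ω := by
    intro a₁ a₂ ω
    by_cases h1 : d₂ a₁ (V₂ a₁ ω) = a₂ <;> by_cases h2 : d₁ (V₁ ω) = a₁ <;>
      simp [Set.indicator, hAdef, h1, h2]
  have hRpt : ∀ (a₁ a₂ : Bool) (ω : Ω),
      (μ[U a₁ a₂ | MeasurableSpace.comap (V₂ a₁) inferInstance]) ω
          * (if d₂ a₁ (V₂ a₁ ω) = a₂ then (1:ℝ) else 0)
          * (if d₁ (V₁ ω) = a₁ then (1:ℝ) else 0)
        = (A a₁ a₂).indicator (μ[U a₁ a₂ | MeasurableSpace.comap (V₂ a₁) inferInstance]) ω := by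
    intro a₁ a₂ ω
    by_cases h1 : d₂ a₁ (V₂ a₁ ω) = a₂ <;> by_cases h2 : d₁ (V₁ ω) = a₁ <;>
      simp [Set.indicator, hAdef, h1, h2]
  have hFint : ∀ a₁ a₂ : Bool, Integrable ((A a₁ a₂).indicator (U a₁ a₂)) μ :=
    fun a₁ a₂ => (hUint a₁ a₂).indicator (hA_meas a₁ a₂)
  have hGint : ∀ a₁ a₂ : Bool,
      Integrable ((A a₁ a₂).indicator
        (μ[U a₁ a₂ | MeasurableSpace.comap (V₂ a₁) inferInstance])) μ :=
    fun a₁ a₂ => integrable_condExp.indicator (hA_meas a₁ a₂)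
  calc
    ∫ ω, ∑ a₁ : Bool, ∑ a₂ : Bool,
        U a₁ a₂ ω * (if d₂ a₁ (V₂ a₁ ω) = a₂ then (1:ℝ) else 0)
          * (if d₁ (V₁ ω) = a₁ then (1:ℝ) else 0) ∂μ
      = ∫ ω, ∑ a₁ : Bool, ∑ a₂ : Bool, (A a₁ a₂).indicator (U a₁ a₂) ω ∂μ := by
        congr 1; funext ω; exact Finset.sum_congr rfl fun a₁ _ =>
          Finset.sum_congr rfl fun a₂ _ => hLpt a₁ a₂ ω
    _ = ∑ a₁ : Bool, ∑ a₂ : Bool, ∫ ω, (A a₁ a₂).indicator (U a₁ a₂) ω ∂μ := by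
        rw [integral_finset_sum _ fun a₁ _ =>
          integrable_finset_sum _ fun a₂ _ => hFint a₁ a₂]
        exact Finset.sum_congr rfl fun a₁ _ =>
          integral_finset_sum _ fun a₂ _ => hFint a₁ a₂
    _ = ∑ a₁ : Bool, ∑ a₂ : Bool, ∫ ω in A a₁ a₂, U a₁ a₂ ω ∂μ := by
        exact Finset.sum_congr rfl fun a₁ _ => Finset.sum_congr rfl fun a₂ _ =>
          integral_indicator (hA_meas a₁ a₂)
    _ = ∑ a₁ : Bool, ∑ a₂ : Bool, ∫ ω in A a₁ a₂,
          (μ[U a₁ a₂ | MeasurableSpace.comap (V₂ a₁) inferInstance]) ω ∂μ := by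
        exact Finset.sum_congr rfl fun a₁ _ => Finset.sum_congr rfl fun a₂ _ => key a₁ a₂
    _ = ∑ a₁ : Bool, ∑ a₂ : Bool, ∫ ω,
          (A a₁ a₂).indicator
            (μ[U a₁ a₂ | MeasurableSpace.comap (V₂ a₁) inferInstance]) ω ∂μ := by
        exact Finset.sum_congr rfl fun a₁ _ => Finset.sum_congr rfl fun a₂ _ =>
          (integral_indicator (hA_meas a₁ a₂)).symm
    _ = ∑ a₁ : Bool, ∫ ω, ∑ a₂ : Bool,
          (A a₁ a₂).indicator
            (μ[U a₁ a₂ | MeasurableSpace.comap (V₂ a₁) inferInstance]) ω ∂μ := by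
        exact Finset.sum_congr rfl fun a₁ _ =>
          (integral_finset_sum _ fun a₂ _ => hGint a₁ a₂).symm
    _ = ∑ a₁ : Bool, ∫ ω,
        (∑ a₂ : Bool,
          (μ[U a₁ a₂ | MeasurableSpace.comap (V₂ a₁) inferInstance]) ω
            * (if d₂ a₁ (V₂ a₁ ω) = a₂ then (1:ℝ) else 0))
          * (if d₁ (V₁ ω) = a₁ then (1:ℝ) else 0) ∂μ := by
        refine Finset.sum_congr rfl fun a₁ _ => ?_
        congr 1; funext ω
        rw [Finset.sum_mul]
        exact Finset.sum_congr rfl fun a₂ _ => (hRpt a₁ a₂ ω).symm
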